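/- Let X_j ~ N(θ_j, σ²) independently for j = 1,...,d, with θ_j ≥ a > 0 for all j in a set S of size at most s, and suppose a/σ ≥ Φ⁻¹(δ) − Φ⁻¹(α'/s). Define Ŝ = {j : X_j/σ ≥ max(Φ⁻¹(α'/s) + a/σ, Φ⁻¹(δ))}. Then P(S ⊄ Ŝ) ≤ α'. -/

import Mathlib

open MeasureTheory ProbabilityTheory Real Set

/-- The standard normal CDF. -/
noncomputable def Phi (y : ℝ) : ℝ := ((gaussianReal 0 1) (Set.Iic y)).toReal

/-- The standard normal quantile function (inverse CDF). -/
noncomputable def PhiInv : ℝ → ℝ := Function.invFun Phi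

lemma Phi_eq_cdf : Phi = ProbabilityTheory.cdf (gaussianReal 0 1) := by
  ext y
  rw [ProbabilityTheory.cdf_eq_real]
  rfl

lemma Phi_integral (y : ℝ) : Phi y = ∫ x in Iic y, ProbabilityTheory.gaussianPDFReal 0 1 x := by
  rw [Phi, ProbabilityTheory.gaussianReal_apply_eq_integral 0 one_ne_zero, ENNReal.toReal_ofReal]
  exact setIntegral_nonneg measurableSet_Iic fun x _ =>
    ProbabilityTheory.gaussianPDFReal_nonneg _ _ x

lemma continuous_Phi : Continuous Phi := by
  have hint : Integrable (ProbabilityTheory.gaussianPDFReal 0 1) :=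
    ProbabilityTheory.integrable_gaussianPDFReal 0 1
  have h := hint.continuous_primitive 0
  have hc : Continuous fun y : ℝ => Phi 0 + ∫ x in (0:ℝ)..y, ProbabilityTheory.gaussianPDFReal 0 1 x :=
    continuous_const.add h
  refine hc.congr fun y => ?_
  have := intervalIntegral.integral_Iic_sub_Iic (f := ProbabilityTheory.gaussianPDFReal 0 1)
    (μ := volume) (a := 0) (b := y) hint.integrableOn hint.integrableOn
  rw [Phi_integral y, Phi_integral 0] at *
  linarith

lemma monotone_Phi : Monotone Phi := fun x y hxy =>
  ENNReal.toReal_mono (measure_ne_top _ _) (measure_mono (Iic_subset_Iic.mpr hxy))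

lemma exists_Phi_eq {p : ℝ} (h0 : 0 < p) (h1 : p < 1) : ∃ x, Phi x = p := by
  have htop : Filter.Tendsto Phi Filter.atTop (nhds 1) := by
    rw [Phi_eq_cdf]; exact ProbabilityTheory.tendsto_cdf_atTop _
  have hbot : Filter.Tendsto Phi Filter.atBot (nhds 0) := by
    rw [Phi_eq_cdf]; exact ProbabilityTheory.tendsto_cdf_atBot _
  obtain ⟨x₁, hx₁⟩ := (hbot.eventually_lt_const h0).exists
  obtain ⟨x₂, hx₂⟩ := (htop.eventually_const_lt h1).exists
  have := intermediate_value_univ x₁ x₂ continuous_Phi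
  exact this ⟨hx₁.le, hx₂.le⟩

lemma Phi_PhiInv {p : ℝ} (h0 : 0 < p) (h1 : p < 1) : Phi (PhiInv p) = p :=
  Function.invFun_eq (exists_Phi_eq h0 h1)

lemma gaussianReal_Iic_eq (θ σ : ℝ) (hσ : 0 < σ) (c : ℝ) :
    gaussianReal θ (σ ^ 2).toNNReal (Iic c) = gaussianReal 0 1 (Iic ((c - θ) / σ)) := by
  have h1 : (gaussianReal 0 1).map (σ * ·) = gaussianReal 0 (σ ^ 2).toNNReal := by
    rw [ProbabilityTheory.gaussianReal_map_const_mul]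
    congr 1
    · ring
    · ext
      simp [Real.coe_toNNReal _ (sq_nonneg σ)]
  have hmap : (gaussianReal 0 1).map (fun x => σ * x + θ) = gaussianReal θ (σ ^ 2).toNNReal := by
    have : (gaussianReal 0 1).map (fun x => σ * x + θ)
        = ((gaussianReal 0 1).map (σ * ·)).map (· + θ) := by
      rw [Measure.map_map (measurable_add_const θ) (measurable_const_mul σ)]
      rfl
    rw [this, h1, ProbabilityTheory.gaussianReal_map_add_const, zero_add]
  rw [← hmap, Measure.map_apply (by fun_prop) measurableSet_Iic]
  congr 1
  ext x
  simp only [mem_preimage, mem_Iic]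
  rw [le_div_iff₀ hσ]
  constructor <;> intro h <;> nlinarith

/-- Support coverage: with `X_j ~ N(θ_j, σ²)` independent, support of size at most `s`,
signals at least `a`, and SNR condition `a/σ ≥ Φ⁻¹(δ) − Φ⁻¹(α'/s)`, the thresholding set
`Ŝ = {j : X_j/σ ≥ max(Φ⁻¹(α'/s) + a/σ, Φ⁻¹(δ))}` misses the support with probability
at most `α'`. -/
theorem support_coverage {Ω : Type*} [MeasurableSpace Ω] (μ : Measure Ω)
    [IsProbabilityMeasure μ] (d s : ℕ) (hs : 1 ≤ s)
    (σ a δ α' : ℝ) (hσ : 0 < σ) (ha : 0 < a)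
    (hδ0 : 0 < δ) (hδ1 : δ < 1) (hα'0 : 0 < α') (hα'1 : α' < 1)
    (θ : Fin d → ℝ) (X : Fin d → Ω → ℝ)
    (hmeas : ∀ j, Measurable (X j))
    (hlaw : ∀ j, μ.map (X j) = gaussianReal (θ j) (σ ^ 2).toNNReal)
    (hind : iIndepFun X μ)
    (hsupp : (Finset.univ.filter (fun j => θ j ≠ 0)).card ≤ s)
    (hsig : ∀ j, θ j ≠ 0 → a ≤ θ j)
    (hsnr : PhiInv δ - PhiInv (α' / s) ≤ a / σ) :
    (μ {ω | ∃ j, θ j ≠ 0 ∧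
      X j ω / σ < max (PhiInv (α' / s) + a / σ) (PhiInv δ)}).toReal ≤ α' := by
  set q := PhiInv (α' / s) with hq
  have hs' : (1 : ℝ) ≤ s := by exact_mod_cast hs
  have hs0 : (0 : ℝ) < s := by linarith
  have hp0 : 0 < α' / s := div_pos hα'0 hs0
  have hp1 : α' / s < 1 := lt_of_le_of_lt (div_le_self hα'0.le hs') hα'1
  have hPhiq : Phi q = α' / s := Phi_PhiInv hp0 hp1
  have hmax : max (q + a / σ) (PhiInv δ) = q + a / σ := max_eq_left (by linarith)
  set S := Finset.univ.filter (fun j : Fin d => θ j ≠ 0) with hS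
  have hsub : {ω | ∃ j, θ j ≠ 0 ∧ X j ω / σ < max (q + a / σ) (PhiInv δ)}
      ⊆ ⋃ j ∈ S, {ω | X j ω < σ * q + a} := by
    rintro ω ⟨j, hj, hlt⟩
    refine mem_iUnion₂.mpr ⟨j, Finset.mem_filter.mpr ⟨Finset.mem_univ _, hj⟩, ?_⟩
    rw [hmax] at hlt
    have h1 := (div_lt_iff₀ hσ).mp hlt
    have h2 : a / σ * σ = a := div_mul_cancel₀ a hσ.ne'
    simp only [mem_setOf_eq]
    nlinarith
  have key : ∀ j ∈ S, μ {ω | X j ω < σ * q + a} ≤ ENNReal.ofReal (α' / s) := by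
    intro j hj
    have hθ : θ j ≠ 0 := (Finset.mem_filter.mp hj).2
    have haj : a ≤ θ j := hsig j hθ
    calc μ {ω | X j ω < σ * q + a}
        ≤ μ (X j ⁻¹' Iic (σ * q + a)) := measure_mono fun ω h => show X j ω ≤ _ from le_of_lt h
      _ = (μ.map (X j)) (Iic (σ * q + a)) :=
          (Measure.map_apply (hmeas j) measurableSet_Iic).symm
      _ = gaussianReal (θ j) (σ ^ 2).toNNReal (Iic (σ * q + a)) := by rw [hlaw j]
      _ = gaussianReal 0 1 (Iic ((σ * q + a - θ j) / σ)) := gaussianReal_Iic_eq _ _ hσ _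
      _ ≤ gaussianReal 0 1 (Iic q) := by
          refine measure_mono (Iic_subset_Iic.mpr ?_)
          rw [div_le_iff₀ hσ]
          nlinarith
      _ = ENNReal.ofReal (α' / s) := by
          rw [← hPhiq, Phi, ENNReal.ofReal_toReal (measure_ne_top _ _)]
  have hμ : μ {ω | ∃ j, θ j ≠ 0 ∧ X j ω / σ < max (q + a / σ) (PhiInv δ)}
      ≤ ENNReal.ofReal α' := by
    calc μ {ω | ∃ j, θ j ≠ 0 ∧ X j ω / σ < max (q + a / σ) (PhiInv δ)}
        ≤ μ (⋃ j ∈ S, {ω | X j ω < σ * q + a}) := measure_mono hsub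
      _ ≤ ∑ j ∈ S, μ {ω | X j ω < σ * q + a} := measure_biUnion_finset_le S _
      _ ≤ ∑ j ∈ S, ENNReal.ofReal (α' / s) := Finset.sum_le_sum key
      _ = (S.card : ENNReal) * ENNReal.ofReal (α' / s) := by
          rw [Finset.sum_const, nsmul_eq_mul]
      _ ≤ (s : ENNReal) * ENNReal.ofReal (α' / s) := by
          exact mul_le_mul_left (by exact_mod_cast hsupp) _
      _ = ENNReal.ofReal ((s : ℝ) * (α' / s)) := by
          rw [← ENNReal.ofReal_natCast s, ← ENNReal.ofReal_mul (Nat.cast_nonneg s)]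
      _ = ENNReal.ofReal α' := by rw [mul_div_cancel₀ _ hs0.ne']
  calc (μ {ω | ∃ j, θ j ≠ 0 ∧ X j ω / σ < max (q + a / σ) (PhiInv δ)}).toReal
      ≤ (ENNReal.ofReal α').toReal := ENNReal.toReal_mono ENNReal.ofReal_ne_top hμ
    _ = α' := ENNReal.toReal_ofReal hα'0.le
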